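/- The smallest positive zero of the Bessel function J_ν (for ν > −1) satisfies x_{ν,1} = lim_{m→∞} (Z_ν(2m))^{-1/(2m)}, where Z_ν(2m) = Σ_{n=1}^∞ x_{ν,n}^{-2m} is the Rayleigh sum. -/

import Mathlib

open Filter
open FormalMultilinearSeries

private lemma entire_dslope {F : ℂ → ℂ} (hF : Differentiable ℂ F) (a : ℂ) :
    Differentiable ℂ (dslope F a) := by
  intro z
  rcases eq_or_ne z a with rfl | hz
  · obtain ⟨p, hp⟩ := hF.analyticAt z
    exact (hp.has_fpower_series_dslope_fslope).analyticAt.differentiableAt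
  · exact (differentiableAt_dslope_of_ne hz).mpr (hF z)

private lemma factor_zeros {F : ℂ → ℂ} (hF : Differentiable ℂ F) (s : Finset ℂ)
    (hz : ∀ a ∈ s, F a = 0) :
    ∃ G : ℂ → ℂ, Differentiable ℂ G ∧ ∀ w, F w = (∏ a ∈ s, (w - a)) * G w := by
  classical
  induction s using Finset.induction_on with
  | empty => exact ⟨F, hF, by simp⟩
  | @insert a s ha ih =>
    obtain ⟨G, hG, hfac⟩ := ih (fun b hb => hz b (Finset.mem_insert_of_mem hb))
    have hP : (∏ b ∈ s, (a - b)) ≠ 0 := by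
      refine Finset.prod_ne_zero_iff.mpr (fun b hb => sub_ne_zero.mpr ?_)
      rintro rfl; exact ha hb
    have hGa : G a = 0 := by
      have h0 := hfac a
      rw [hz a (Finset.mem_insert_self a s)] at h0
      exact (mul_eq_zero.mp h0.symm).resolve_left hP
    refine ⟨dslope G a, entire_dslope hG a, fun w => ?_⟩
    have h1 : (w - a) * dslope G a w = G w := by
      have h2 := sub_smul_dslope G a w
      rw [hGa, sub_zero] at h2
      simpa [smul_eq_mul] using h2
    rw [Finset.prod_insert ha, hfac w, ← h1]; ring

private lemma norm_at_zero_le {F : ℂ → ℂ} (hF : Differentiable ℂ F) {s : Finset ℂ}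
    (hz : ∀ a ∈ s, F a = 0) {r M : ℝ} (hr : 0 < r) (hs : ∀ a ∈ s, ‖a‖ ≤ r)
    (hM : ∀ w : ℂ, ‖w‖ = 5 * r → ‖F w‖ ≤ M) :
    ‖F 0‖ ≤ M / 4 ^ s.card := by
  obtain ⟨G, hG, hfac⟩ := factor_zeros hF s hz
  have hM0 : 0 ≤ M := by
    refine le_trans (norm_nonneg (F (5 * r : ℝ))) (hM _ ?_)
    rw [Complex.norm_real, Real.norm_eq_abs, abs_of_pos (by linarith)]
  -- bound for G on the sphere of radius 5r
  have hGb : ∀ w : ℂ, ‖w‖ = 5 * r → ‖G w‖ ≤ M / (4 * r) ^ s.card := by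
    intro w hw
    have hprod : (4 * r) ^ s.card ≤ ∏ a ∈ s, ‖w - a‖ := by
      rw [← Finset.prod_const]
      refine Finset.prod_le_prod (fun _ _ => by positivity) (fun a haa => ?_)
      have := norm_sub_norm_le w a
      have h2 := hs a haa
      calc 4 * r ≤ ‖w‖ - ‖a‖ := by rw [hw]; linarith
        _ ≤ ‖w - a‖ := norm_sub_norm_le w a
    have hFw : ‖F w‖ = (∏ a ∈ s, ‖w - a‖) * ‖G w‖ := by
      rw [hfac w, norm_mul, norm_prod]
    have h4 : (0:ℝ) < (4 * r) ^ s.card := by positivity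
    rw [le_div_iff₀ h4]
    calc ‖G w‖ * (4 * r) ^ s.card ≤ ‖G w‖ * ∏ a ∈ s, ‖w - a‖ := by
          exact mul_le_mul_of_nonneg_left hprod (norm_nonneg _)
      _ = ‖F w‖ := by rw [hFw, mul_comm]
      _ ≤ M := hM w hw
  -- max modulus
  have h5r : (0:ℝ) < 5 * r := by linarith
  have hG0 : ‖G 0‖ ≤ M / (4 * r) ^ s.card := by
    refine Complex.norm_le_of_forall_mem_frontier_norm_le
      (Metric.isBounded_ball (x := (0:ℂ)) (r := 5 * r)) hG.diffContOnCl ?_ ?_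
    · intro z hzf
      rw [frontier_ball (0:ℂ) h5r.ne'] at hzf
      exact hGb z (by simpa [Complex.dist_eq] using hzf)
    · exact subset_closure (Metric.mem_ball_self h5r)
  have hF0 : ‖F 0‖ = (∏ a ∈ s, ‖a‖) * ‖G 0‖ := by
    rw [hfac 0, norm_mul, norm_prod]
    simp
  rw [hF0]
  have hpa : (∏ a ∈ s, ‖a‖) ≤ r ^ s.card := by
    rw [← Finset.prod_const]
    exact Finset.prod_le_prod (fun _ _ => norm_nonneg _) hs
  calc (∏ a ∈ s, ‖a‖) * ‖G 0‖ ≤ r ^ s.card * (M / (4 * r) ^ s.card) := by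
        exact mul_le_mul hpa hG0 (norm_nonneg _) (by positivity)
    _ = M / 4 ^ s.card := by
        rw [mul_pow]
        field_simp

noncomputable def besselCoef (ν : ℝ) (n : ℕ) : ℝ :=
  (-1) ^ n / (Real.Gamma (n + ν + 1) * n.factorial)

noncomputable def besselF (ν : ℝ) : ℂ → ℂ :=
  fun z => ∑' n : ℕ, (besselCoef ν n : ℂ) * z ^ n

lemma gamma_lb {ν : ℝ} (hν : -1 < ν) (n : ℕ) :
    min (Real.Gamma (ν + 1)) (Real.Gamma (ν + 2)) ≤ Real.Gamma ((n : ℝ) + ν + 1) := by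
  induction n with
  | zero => simpa using min_le_left _ _
  | succ n ih =>
    rcases Nat.eq_zero_or_pos n with rfl | hn
    · have : ((0:ℕ):ℝ) + 1 + ν + 1 = ν + 2 := by push_cast; ring
      rw [show (((0:ℕ)+1:ℕ):ℝ) + ν + 1 = ν + 2 by push_cast; ring]
      exact min_le_right _ _
    · have hpos : (0:ℝ) < (n : ℝ) + ν + 1 := by
        have : (1:ℝ) ≤ (n:ℝ) := by exact_mod_cast hn
        linarith
    
      have heq : ((n+1 : ℕ) : ℝ) + ν + 1 = ((n:ℝ) + ν + 1) + 1 := by push_cast; ring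
      rw [heq, Real.Gamma_add_one hpos.ne']
      have h1 : (1:ℝ) ≤ (n:ℝ) + ν + 1 := by
        have : (1:ℝ) ≤ (n:ℝ) := by exact_mod_cast hn
        linarith
      have hg : 0 < Real.Gamma ((n:ℝ) + ν + 1) := Real.Gamma_pos_of_pos hpos
      nlinarith
lemma gamma_min_pos {ν : ℝ} (hν : -1 < ν ) :
    0 < min (Real.Gamma (ν + 1)) (Real.Gamma (ν + 2)) :=
  lt_min (Real.Gamma_pos_of_pos (by linarith)) (Real.Gamma_pos_of_pos (by linarith))

lemma besselCoef_abs {ν : ℝ} (hν : -1 < ν) (n : ℕ) :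
    |besselCoef ν n| = 1 / (Real.Gamma ((n:ℝ) + ν + 1) * n.factorial) := by
  have hg : 0 < Real.Gamma ((n:ℝ) + ν + 1) := Real.Gamma_pos_of_pos (by
    have : (0:ℝ) ≤ (n:ℝ) := Nat.cast_nonneg n
    linarith)
  have hf : (0:ℝ) < n.factorial := by exact_mod_cast n.factorial_pos
  rw [besselCoef, abs_div, abs_pow, abs_neg, abs_one, one_pow, abs_of_pos (by positivity)]

lemma besselCoef_abs_le {ν : ℝ} (hν : -1 < ν) (n : ℕ) :
    |besselCoef ν n| ≤ (min (Real.Gamma (ν + 1)) (Real.Gamma (ν + 2)))⁻¹ * (1 / n.factorial) := by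
  rw [besselCoef_abs hν]
  have hγ := gamma_min_pos hν
  have hg := gamma_lb hν n
  have hgp : 0 < Real.Gamma ((n:ℝ) + ν + 1) := lt_of_lt_of_le hγ hg
  have hf : (0:ℝ) < n.factorial := by exact_mod_cast n.factorial_pos
  rw [one_div, one_div, mul_inv]
  exact mul_le_mul_of_nonneg_right (by exact inv_anti₀ hγ hg) (by positivity)

lemma besselCoef_summable {ν : ℝ} (hν : -1 < ν) {u : ℝ} (hu : 0 ≤ u) :
    Summable (fun n => |besselCoef ν n| * u ^ n) := by
  set γ := min (Real.Gamma (ν + 1)) (Real.Gamma (ν + 2))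
  refine Summable.of_nonneg_of_le (fun n => by positivity)
    (fun n => ?_) ((Real.summable_pow_div_factorial u).mul_left γ⁻¹)
  calc |besselCoef ν n| * u ^ n ≤ (γ⁻¹ * (1 / n.factorial)) * u ^ n :=
        mul_le_mul_of_nonneg_right (besselCoef_abs_le hν n) (by positivity)
    _ = γ⁻¹ * (u ^ n / n.factorial) := by ring

noncomputable def besselSeries (ν : ℝ) : FormalMultilinearSeries ℂ ℂ ℂ :=
  ofScalars ℂ (fun n => (besselCoef ν n : ℂ))

lemma besselSeries_radius {ν : ℝ} (hν : -1 < ν) : (besselSeries ν).radius = ⊤ := by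
  apply FormalMultilinearSeries.radius_eq_top_of_summable_norm
  intro r
  have : ∀ n : ℕ, ‖besselSeries ν n‖ * (r:ℝ) ^ n = |besselCoef ν n| * (r:ℝ) ^ n := by
    intro n
    rw [besselSeries, ofScalars_norm]
    norm_num [Complex.norm_real]
  rw [funext this]
  set γ := min (Real.Gamma (ν + 1)) (Real.Gamma (ν + 2))
  refine Summable.of_nonneg_of_le (fun n => by positivity) (fun n => ?_)
    ((Real.summable_pow_div_factorial r).mul_left γ⁻¹)
  calc |besselCoef ν n| * (r:ℝ) ^ n ≤ (γ⁻¹ * (1 / n.factorial)) * (r:ℝ) ^ n :=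
        mul_le_mul_of_nonneg_right (besselCoef_abs_le hν n) (by positivity)
    _ = γ⁻¹ * ((r:ℝ) ^ n / n.factorial) := by ring

lemma besselF_eq_sum (ν : ℝ) : besselF ν = (besselSeries ν).sum := by
  funext z
  rw [besselF, FormalMultilinearSeries.sum]
  refine tsum_congr fun n => ?_
  rw [besselSeries, ofScalars_apply_eq]
  simp [smul_eq_mul]

lemma besselF_entire {ν : ℝ} (hν : -1 < ν) : Differentiable ℂ (besselF ν) := by
  have h0 : 0 < (besselSeries ν).radius := by rw [besselSeries_radius hν]; exact ENNReal.zero_lt_top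
  have hb := (besselSeries ν).hasFPowerSeriesOnBall h0
  rw [← besselF_eq_sum] at hb
  intro z
  refine (hb.analyticAt_of_mem ?_).differentiableAt
  rw [besselSeries_radius hν]
  simp [EMetric.mem_ball, edist_lt_top]

lemma besselF_norm_le {ν : ℝ} (hν : -1 < ν) (z : ℂ) :
    ‖besselF ν z‖ ≤ (min (Real.Gamma (ν + 1)) (Real.Gamma (ν + 2)))⁻¹ * Real.exp ‖z‖ := by
  set γ := min (Real.Gamma (ν + 1)) (Real.Gamma (ν + 2))
  have hterm : ∀ n : ℕ, ‖(besselCoef ν n : ℂ) * z ^ n‖ = |besselCoef ν n| * ‖z‖ ^ n := by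
    intro n; rw [norm_mul, norm_pow, Complex.norm_real, Real.norm_eq_abs]
  have hsum : Summable (fun n => ‖(besselCoef ν n : ℂ) * z ^ n‖) := by
    rw [funext hterm]; exact besselCoef_summable hν (norm_nonneg z)
  calc ‖besselF ν z‖ ≤ ∑' n, ‖(besselCoef ν n : ℂ) * z ^ n‖ := norm_tsum_le_tsum_norm hsum
    _ ≤ ∑' n : ℕ, γ⁻¹ * (‖z‖ ^ n / n.factorial) := by
        refine Summable.tsum_le_tsum (fun n => ?_) hsum
          ((Real.summable_pow_div_factorial ‖z‖).mul_left γ⁻¹)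
        rw [hterm n]
        calc |besselCoef ν n| * ‖z‖ ^ n ≤ (γ⁻¹ * (1 / n.factorial)) * ‖z‖ ^ n :=
              mul_le_mul_of_nonneg_right (besselCoef_abs_le hν n) (by positivity)
          _ = γ⁻¹ * (‖z‖ ^ n / n.factorial) := by ring
    _ = γ⁻¹ * Real.exp ‖z‖ := by
        rw [tsum_mul_left]
        congr 1
        rw [Real.exp_eq_exp_ℝ, NormedSpace.exp_eq_tsum_div]

lemma besselF_zero {ν : ℝ} (hν : -1 < ν) :
    besselF ν 0 = ((Real.Gamma (ν + 1))⁻¹ : ℝ) := by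
  rw [besselF]
  rw [tsum_eq_single 0 (fun n hn => by simp [zero_pow hn])]
  norm_num [besselCoef]

lemma bessel_sum_factor {ν : ℝ} (t : ℝ) (ht : 0 < t) :
    (∑' n : ℕ, ((-1) ^ n / (Real.Gamma (n + ν + 1) * n.factorial)) *
        (t / 2) ^ (2 * (n : ℝ) + ν))
      = (∑' n : ℕ, besselCoef ν n * (t ^ 2 / 4) ^ n) * (t / 2) ^ ν := by
  rw [← tsum_mul_right]
  refine tsum_congr fun n => ?_
  have ht2 : (0:ℝ) < t / 2 := by linarith
  have h1 : (t / 2 : ℝ) ^ (2 * (n : ℝ) + ν) = (t / 2) ^ (2 * (n:ℝ)) * (t / 2) ^ ν :=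
    Real.rpow_add ht2 _ _
  have h2 : (t / 2 : ℝ) ^ (2 * (n : ℝ)) = (t ^ 2 / 4) ^ n := by
    have : (2 * (n : ℝ)) = ((2 * n : ℕ) : ℝ) := by push_cast; ring
    rw [this, Real.rpow_natCast, pow_mul]
    norm_num
    ring_nf
  rw [h1, h2, besselCoef]
  ring

lemma besselF_real {ν : ℝ} (hν : -1 < ν) {u : ℝ} (hu : 0 ≤ u) :
    besselF ν ((u : ℂ)) = ((∑' n : ℕ, besselCoef ν n * u ^ n : ℝ) : ℂ) := by
  have hsum : Summable (fun n => besselCoef ν n * u ^ n) := by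
    refine Summable.of_abs ?_
    have : ∀ n : ℕ, |besselCoef ν n * u ^ n| = |besselCoef ν n| * u ^ n := by
      intro n; rw [abs_mul, abs_pow, abs_of_nonneg hu]
    rw [funext this]
    exact besselCoef_summable hν hu
  rw [besselF]
  rw [show (((∑' n : ℕ, besselCoef ν n * u ^ n : ℝ)) : ℂ)
      = ∑' n : ℕ, ((besselCoef ν n * u ^ n : ℝ) : ℂ) from Complex.ofRealCLM.map_tsum hsum]
  refine tsum_congr fun n => ?_
  push_cast
  ring

lemma bessel_growth {ν : ℝ} (hν : -1 < ν) {x : ℕ → ℝ} (hx0 : 0 < x 0)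
    (hmono : StrictMono x)
    (hzero : ∀ k : ℕ, besselF ν (((x k ^ 2 / 4 : ℝ)) : ℂ) = 0) :
    ∀ᶠ n : ℕ in atTop, (n : ℝ) ≤ x n ^ 2 := by
  set γ := min (Real.Gamma (ν + 1)) (Real.Gamma (ν + 2)) with hγdef
  have hγ : 0 < γ := gamma_min_pos hν
  have hΓ : 0 < Real.Gamma (ν + 1) := Real.Gamma_pos_of_pos (by linarith)
  have hxpos : ∀ k, 0 < x k := fun k => lt_of_lt_of_le hx0 (hmono.le_iff_le.mpr (Nat.zero_le k))
  set K := Real.log (Real.Gamma (ν + 1)) - Real.log γ with hKdef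
  have hmain : ∀ n : ℕ, (4/5 : ℝ) * (((n:ℝ) + 1) * Real.log 4 - K) ≤ x n ^ 2 := by
    intro n
    set r := x n ^ 2 / 4 with hrdef
    have hr : 0 < r := by have := hxpos n; positivity
    set s : Finset ℂ := (Finset.range (n+1)).image (fun k => ((x k ^ 2 / 4 : ℝ) : ℂ)) with hsdef
    have hinj : Set.InjOn (fun k => ((x k ^ 2 / 4 : ℝ) : ℂ)) (Finset.range (n+1)) := by
      intro k _ l _ h
      dsimp only at h
      rw [Complex.ofReal_inj] at h
      have h2 : x k ^ 2 / 4 = x l ^ 2 / 4 := h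
      have h3 : x k = x l := by
        nlinarith [hxpos k, hxpos l]
      exact hmono.injective h3
    have hcard : s.card = n + 1 := by
      rw [hsdef, Finset.card_image_of_injOn hinj, Finset.card_range]
    have hzmem : ∀ a ∈ s, besselF ν a = 0 := by
      intro a ha
      rw [hsdef, Finset.mem_image] at ha
      obtain ⟨k, _, rfl⟩ := ha
      exact hzero k
    have hsle : ∀ a ∈ s, ‖a‖ ≤ r := by
      intro a ha
      rw [hsdef, Finset.mem_image] at ha
      obtain ⟨k, hk, rfl⟩ := ha
      rw [Complex.norm_real, Real.norm_eq_abs, abs_of_pos (by have := hxpos k; positivity)]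
      rw [Finset.mem_range] at hk
      have : x k ≤ x n := hmono.le_iff_le.mpr (Nat.lt_succ_iff.mp hk)
      have := hxpos k
      nlinarith
    have hM : ∀ w : ℂ, ‖w‖ = 5 * r → ‖besselF ν w‖ ≤ γ⁻¹ * Real.exp (5 * r) := by
      intro w hw
      have := besselF_norm_le hν w
      rwa [hw] at this
    have hbound := norm_at_zero_le (besselF_entire hν) hzmem hr hsle hM
    rw [hcard, besselF_zero hν, Complex.norm_real, Real.norm_eq_abs,
      abs_of_pos (by positivity)] at hbound
    -- log manipulation
    have h4 : (0:ℝ) < 4 ^ (n+1) := by positivity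
    have hexp : γ / Real.Gamma (ν + 1) * 4 ^ (n+1) ≤ Real.exp (5 * r) := by
      rw [le_div_iff₀ h4] at hbound
      rw [div_mul_eq_mul_div, div_le_iff₀ hΓ]
      calc γ * 4 ^ (n+1)
          = (γ * Real.Gamma (ν+1)) * ((Real.Gamma (ν+1))⁻¹ * 4 ^ (n+1)) := by
            field_simp
          _ ≤ (γ * Real.Gamma (ν+1)) * (γ⁻¹ * Real.exp (5*r)) :=
            mul_le_mul_of_nonneg_left hbound (by positivity)
          _ = Real.exp (5*r) * Real.Gamma (ν+1) := by
            field_simp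
    have hlog : Real.log (γ / Real.Gamma (ν + 1) * 4 ^ (n+1)) ≤ 5 * r := by
      have hpos : 0 < γ / Real.Gamma (ν + 1) * 4 ^ (n+1) := by positivity
      calc Real.log (γ / Real.Gamma (ν + 1) * 4 ^ (n+1)) ≤ Real.log (Real.exp (5*r)) :=
            Real.log_le_log hpos hexp
        _ = 5 * r := Real.log_exp _
    rw [Real.log_mul (by positivity) (by positivity), Real.log_div hγ.ne' hΓ.ne',
      Real.log_pow] at hlog
    have : ((n:ℝ) + 1) * Real.log 4 - K ≤ 5 * r := by
      push_cast at hlog ⊢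
      rw [hKdef]
      linarith
    rw [hrdef] at this
    linarith
  -- conclude eventually
  have hlog4 : (1.38 : ℝ) ≤ Real.log 4 := by
    have h2 : Real.log 4 = 2 * Real.log 2 := by
      rw [show (4:ℝ) = 2 ^ 2 by norm_num, Real.log_pow]
      push_cast; ring
    nlinarith [Real.log_two_gt_d9]
  have hc : 0 < (4/5 : ℝ) * Real.log 4 - 1 := by nlinarith
  have htend : Tendsto (fun n : ℕ => ((4/5 : ℝ) * Real.log 4 - 1) * (n:ℝ)
      + (4/5) * (Real.log 4 - K)) atTop atTop := by
    apply Filter.tendsto_atTop_add_const_right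
    exact Tendsto.const_mul_atTop hc tendsto_natCast_atTop_atTop
  filter_upwards [htend.eventually_ge_atTop 0] with n hn
  have := hmain n
  nlinarith [this, hn]

set_option maxHeartbeats 1000000 in
lemma final_limit {x : ℕ → ℝ} (hx0 : 0 < x 0) (hmono : StrictMono x)
    (hgrow : ∀ᶠ n : ℕ in atTop, (n : ℝ) ≤ x n ^ 2) :
    Tendsto (fun m : ℕ => (∑' n : ℕ, 1 / x n ^ (2 * m)) ^ (-1 / (2 * (m : ℝ))))
      atTop (nhds (x 0)) := by
  have hxpos : ∀ k, 0 < x k := fun k => lt_of_lt_of_le hx0 (hmono.le_iff_le.mpr (Nat.zero_le k))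
  have hx01 : x 0 < x 1 := hmono Nat.zero_lt_one
  -- summability
  have hsum : ∀ m : ℕ, 2 ≤ m → Summable (fun n : ℕ => 1 / x n ^ (2 * m)) := by
    intro m hm
    have hbase : Summable (fun n : ℕ => 1 / (n : ℝ) ^ 2) := by
      simpa using Real.summable_one_div_nat_pow.mpr one_lt_two
    refine Summable.of_norm_bounded_eventually hbase ?_
    rw [Nat.cofinite_eq_atTop]
    filter_upwards [hgrow, eventually_ge_atTop 1] with n h1 h2
    have hn1 : (1:ℝ) ≤ (n:ℝ) := by exact_mod_cast h2
    have hxn := hxpos n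
    rw [Real.norm_eq_abs, abs_of_pos (by positivity)]
    have key : (n:ℝ) ^ 2 ≤ x n ^ (2 * m) := by
      calc (n:ℝ) ^ 2 ≤ (n:ℝ) ^ m := pow_le_pow_right₀ hn1 hm
        _ ≤ (x n ^ 2) ^ m := pow_le_pow_left₀ (by positivity) h1 m
        _ = x n ^ (2 * m) := by rw [← pow_mul]
    exact one_div_le_one_div_of_le (by positivity) key
  -- the tail constant
  have hS4 : Summable (fun n : ℕ => 1 / x n ^ 4) := by simpa using hsum 2 le_rfl
  have hB : Summable (fun n : ℕ => 1 / x (n + 1) ^ 4) := (summable_nat_add_iff 1).mpr hS4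
  set B : ℝ := ∑' n : ℕ, 1 / x (n + 1) ^ 4 with hBdef
  have hB0 : 0 ≤ B := tsum_nonneg (fun n => by have := hxpos (n+1); positivity)
  set q : ℝ := x 0 ^ 2 / x 1 ^ 2 with hqdef
  have hq0 : 0 ≤ q := by rw [hqdef]; have := hxpos 1; positivity
  have hq1 : q < 1 := by
    rw [hqdef, div_lt_one (pow_pos (hxpos 1) 2)]
    nlinarith [hxpos 0, hxpos 1]
  set δ : ℕ → ℝ := fun m => q ^ m * (x 1 ^ 4 * B) with hδdef
  have hδ0 : ∀ m, 0 ≤ δ m := fun m => by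
    have h1 := hxpos 1
    rw [hδdef]
    positivity
  have hδtend : Tendsto δ atTop (nhds 0) := by
    have := (tendsto_pow_atTop_nhds_zero_of_lt_one hq0 hq1).mul_const (x 1 ^ 4 * B)
    simpa using this
  have hlowtend : Tendsto (fun m : ℕ => x 0 / (1 + δ m)) atTop (nhds (x 0)) := by
    have h1 : Tendsto (fun m : ℕ => 1 + δ m) atTop (nhds 1) := by
      simpa using tendsto_const_nhds.add hδtend
    have h2 : Tendsto (fun m : ℕ => x 0 / (1 + δ m)) atTop (nhds (x 0 / 1)) :=
      Tendsto.div tendsto_const_nhds h1 one_ne_zero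
    simpa using h2
  have hboth : ∀ m : ℕ, 2 ≤ m →
      x 0 / (1 + δ m) ≤ (∑' n : ℕ, 1 / x n ^ (2 * m)) ^ (-1 / (2 * (m : ℝ))) ∧
      (∑' n : ℕ, 1 / x n ^ (2 * m)) ^ (-1 / (2 * (m : ℝ))) ≤ x 0 := by
    intro m hm
    obtain ⟨k, rfl⟩ : ∃ k, m = k + 2 := ⟨m - 2, by omega⟩
    have hkR : (0:ℝ) ≤ (k:ℝ) := Nat.cast_nonneg k
    have hS := hsum (k + 2) hm
    set S : ℝ := ∑' n : ℕ, 1 / x n ^ (2 * (k + 2)) with hSdef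
    set r : ℝ := -1 / (2 * ((k + 2 : ℕ) : ℝ)) with hrdef
    have hx0p : (0:ℝ) < x 0 ^ (2 * (k + 2)) := by positivity
    have hlow : 1 / x 0 ^ (2 * (k + 2)) ≤ S :=
      Summable.le_tsum hS 0 (fun j _ => by have := hxpos j; positivity)
    have hT : S = 1 / x 0 ^ (2 * (k + 2)) + ∑' n : ℕ, 1 / x (n + 1) ^ (2 * (k + 2)) :=
      Summable.tsum_eq_zero_add hS
    have hshift : Summable (fun n : ℕ => 1 / x (n + 1) ^ (2 * (k + 2))) :=
      (summable_nat_add_iff 1).mpr hS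
    have htail : (∑' n : ℕ, 1 / x (n + 1) ^ (2 * (k + 2))) ≤ (1 / x 1 ^ 2) ^ k * B := by
      rw [hBdef, ← tsum_mul_left]
      refine Summable.tsum_le_tsum (fun n => ?_) hshift (hB.mul_left _)
      have hx1n : x 1 ≤ x (n + 1) := hmono.le_iff_le.mpr (Nat.succ_le_succ (Nat.zero_le n))
      have hkey : (x 1 ^ 2) ^ k * x (n + 1) ^ 4 ≤ x (n + 1) ^ (2 * (k + 2)) := by
        have e1 : x (n+1) ^ (2 * (k + 2)) = (x (n+1) ^ 2) ^ k * x (n+1) ^ 4 := by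
          rw [pow_mul]; ring
        rw [e1]
        have := pow_le_pow_left₀ (sq_nonneg (x 1))
          (by nlinarith [hxpos 1] : x 1 ^ 2 ≤ x (n+1) ^ 2) k
        exact mul_le_mul_of_nonneg_right this (by positivity)
      calc 1 / x (n+1) ^ (2 * (k + 2)) ≤ 1 / ((x 1 ^ 2) ^ k * x (n + 1) ^ 4) :=
            one_div_le_one_div_of_le
              (mul_pos (pow_pos (pow_pos (hxpos 1) 2) _) (pow_pos (hxpos (n+1)) 4)) hkey
        _ = (1 / x 1 ^ 2) ^ k * (1 / x (n + 1) ^ 4) := by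
            rw [one_div_pow, div_mul_div_comm, one_mul]
    set u : ℝ := x 0 ^ (2 * (k + 2)) * S with hudef
    have hu1 : (1:ℝ) ≤ u := by
      rw [hudef]
      calc (1:ℝ) = x 0 ^ (2 * (k + 2)) * (1 / x 0 ^ (2 * (k + 2))) := by field_simp
        _ ≤ x 0 ^ (2 * (k + 2)) * S := mul_le_mul_of_nonneg_left hlow hx0p.le
    have huδ : u ≤ 1 + δ (k + 2) := by
      have e2 : x 0 ^ (2 * (k + 2)) * ((1 / x 1 ^ 2) ^ k * B) = δ (k + 2) := by
        have hx1 : (0:ℝ) < x 1 := hxpos 1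
        show x 0 ^ (2 * (k + 2)) * ((1 / x 1 ^ 2) ^ k * B) = q ^ (k + 2) * (x 1 ^ 4 * B)
        rw [hqdef]
        simp only [pow_mul]
        rw [div_pow, div_pow, one_pow, pow_add]
        field_simp
        ring
      rw [hudef, hT, mul_add]
      have h3 : x 0 ^ (2 * (k + 2)) * (1 / x 0 ^ (2 * (k + 2))) = 1 := by field_simp
      rw [h3]
      gcongr
      calc x 0 ^ (2 * (k + 2)) * (∑' n : ℕ, 1 / x (n + 1) ^ (2 * (k + 2)))
          ≤ x 0 ^ (2 * (k + 2)) * ((1 / x 1 ^ 2) ^ k * B) :=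
            mul_le_mul_of_nonneg_left htail hx0p.le
        _ = δ (k + 2) := e2
    have hu0 : (0:ℝ) < u := lt_of_lt_of_le one_pos hu1
    -- rewrite S ^ r
    have hSr : S ^ r = u ^ r * x 0 := by
      have hSu : S = u / x 0 ^ (2 * (k + 2)) := by rw [hudef]; field_simp
      rw [hSu, Real.div_rpow hu0.le (by positivity)]
      have h6 : (x 0 ^ (2 * (k + 2)) : ℝ) ^ r = (x 0)⁻¹ := by
        rw [← Real.rpow_natCast (x 0) (2 * (k + 2)), ← Real.rpow_mul hx0.le]
        have h7 : ((2 * (k + 2) : ℕ) : ℝ) * r = -1 := by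
          rw [hrdef]
          push_cast
          have : (2:ℝ) * ((k:ℝ) + 2) ≠ 0 := by positivity
          field_simp
        rw [h7, Real.rpow_neg_one]
      rw [h6, div_inv_eq_mul]
    have hrle : r ≤ 0 := by
      rw [hrdef, neg_div]
      exact neg_nonpos.mpr (by positivity)
    constructor
    · -- lower bound
      set e : ℝ := 1 / (2 * ((k + 2 : ℕ) : ℝ)) with hedef
      have he0 : 0 < e := by rw [hedef]; positivity
      have hre : r = -e := by rw [hrdef, hedef, neg_div]
      have h1 : u ^ e ≤ (1 + δ (k + 2)) ^ e := Real.rpow_le_rpow hu0.le huδ he0.le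
      have h2 : (1 + δ (k + 2)) ^ e ≤ 1 + δ (k + 2) := by
        calc (1 + δ (k + 2)) ^ e ≤ (1 + δ (k + 2)) ^ (1:ℝ) := by
              refine Real.rpow_le_rpow_of_exponent_le (by linarith [hδ0 (k + 2)]) ?_
              rw [hedef, div_le_one (by positivity)]
              push_cast
              linarith
          _ = 1 + δ (k + 2) := Real.rpow_one _
      have h3 : u ^ e ≤ 1 + δ (k + 2) := le_trans h1 h2
      have huepos : 0 < u ^ e := Real.rpow_pos_of_pos hu0 e
      have h4 : (1 + δ (k + 2))⁻¹ ≤ (u ^ e)⁻¹ := inv_anti₀ huepos h3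
      have h5 : u ^ r = (u ^ e)⁻¹ := by rw [hre, Real.rpow_neg hu0.le]
      rw [hSr, h5]
      calc x 0 / (1 + δ (k + 2)) = (1 + δ (k + 2))⁻¹ * x 0 := by rw [div_eq_inv_mul]
        _ ≤ (u ^ e)⁻¹ * x 0 := mul_le_mul_of_nonneg_right h4 hx0.le
    · -- upper bound
      rw [hSr]
      have h8 : u ^ r ≤ 1 := Real.rpow_le_one_of_one_le_of_nonpos hu1 hrle
      calc u ^ r * x 0 ≤ 1 * x 0 := mul_le_mul_of_nonneg_right h8 hx0.le
        _ = x 0 := one_mul _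
  refine tendsto_of_tendsto_of_tendsto_of_le_of_le' hlowtend tendsto_const_nhds ?_ ?_
  · filter_upwards [eventually_ge_atTop 2] with m hm
    exact (hboth m hm).1
  · filter_upwards [eventually_ge_atTop 2] with m hm
    exact (hboth m hm).2

/-- The smallest positive zero of the Bessel function `J_ν` (order `ν > -1`) is recovered
from the Rayleigh sums: `x 0 = lim_{m → ∞} (Z_ν(2m)) ^ (-1/(2m))` where
`Z_ν(2m) = ∑' n, (x n)^(-2m)`. -/
theorem bessel_first_zero_limit (ν : ℝ) (hν : -1 < ν) (x : ℕ → ℝ)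
    (hx0 : 0 < x 0) (hmono : StrictMono x)
    (hzeros : ∀ t : ℝ, 0 < t →
      ((∑' n : ℕ, ((-1) ^ n / (Real.Gamma (n + ν + 1) * n.factorial)) *
          (t / 2) ^ (2 * (n : ℝ) + ν)) = 0 ↔ ∃ k, t = x k)) :
    Tendsto (fun m : ℕ => (∑' n : ℕ, 1 / (x n) ^ (2 * m)) ^ (-1 / (2 * (m : ℝ))))
      atTop (nhds (x 0)) := by
  have hxpos : ∀ k, 0 < x k := fun k => lt_of_lt_of_le hx0 (hmono.le_iff_le.mpr (Nat.zero_le k))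
  have hzero : ∀ k : ℕ, besselF ν (((x k ^ 2 / 4 : ℝ)) : ℂ) = 0 := by
    intro k
    have ht := hxpos k
    have hA : (∑' n : ℕ, ((-1) ^ n / (Real.Gamma (n + ν + 1) * n.factorial)) *
        (x k / 2) ^ (2 * (n : ℝ) + ν)) = 0 := (hzeros (x k) ht).mpr ⟨k, rfl⟩
    rw [bessel_sum_factor (x k) ht] at hA
    have hC : (0:ℝ) < (x k / 2) ^ (ν : ℝ) := Real.rpow_pos_of_pos (by linarith) ν
    have hBz : (∑' n : ℕ, besselCoef ν n * (x k ^ 2 / 4) ^ n) = 0 := by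
      rcases mul_eq_zero.mp hA with h | h
      · exact h
      · exact absurd h hC.ne'
    rw [besselF_real hν (by positivity : (0:ℝ) ≤ x k ^ 2 / 4), hBz]
    simp
  exact final_limit hx0 hmono (bessel_growth hν hx0 hmono hzero)
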